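/- Let D be a structure with vertex set V, let ψ be a structure (query) containing two distinguished elements x, x' with no relational atoms between them added, and consider blowup(D,2). For every homomorphism h: ψ → blowup(D,2) with h(x) = h(x') = (s,ε), the map that redefines h(x') := (s, 3−ε) and keeps all other values is again a homomorphism into blowup(D,2), and the assignment h ↦ F(h) is injective. -/

import Mathlib

/-- A relational signature: a type of relation symbols with arities. -/
structure Sig where
  symb : Type
  ar : symb → ℕ

/-- A finite relational structure over a signature. -/
structure Str (σ : Sig) where
  V : Type
  [fin : Fintype V]
  rel : ∀ s : σ.symb, Set (Fin (σ.ar s) → V)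

attribute [instance] Str.fin

/-- `f` is a homomorphism of relational structures from `A` to `B`. -/
def IsHom {σ : Sig} (A B : Str σ) (f : A.V → B.V) : Prop :=
  ∀ (s : σ.symb) (t : Fin (σ.ar s) → A.V), t ∈ A.rel s → (f ∘ t) ∈ B.rel s

/-- The number of homomorphisms from `A` to `B` (bag semantics: `A(B) = |Hom(A,B)|`). -/
noncomputable def homCount {σ : Sig} (A B : Str σ) : ℕ :=
  Nat.card {f : A.V → B.V // IsHom A B f}


/-- The `k`-fold blow-up of a structure `D`. -/
def blowup {σ : Sig} (D : Str σ) (k : ℕ) : Str σ where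
  V := D.V × Fin k
  rel := fun s => {t | (fun i => (t i).1) ∈ D.rel s}

/-- For every homomorphism `h : ψ → blowup(D,2)` with `h x = h x' = (s,ε)`, the map
`F(h)` redefining `h(x')` to the other copy `(s, ε+1)` of `s` (and keeping all other
values) is again a homomorphism into `blowup(D,2)`, and `h ↦ F(h)` is injective on
the set of such homomorphisms. -/
theorem stmt9 {σ : Sig} (ψ D : Str σ) [DecidableEq ψ.V] (x x' : ψ.V) (hxx : x ≠ x') :
    (∀ h : ψ.V → (blowup D 2).V, IsHom ψ (blowup D 2) h → h x = h x' →
      IsHom ψ (blowup D 2) (Function.update h x' ((h x').1, (h x').2 + 1))) ∧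
    Set.InjOn (fun h : ψ.V → (blowup D 2).V =>
        Function.update h x' ((h x').1, (h x').2 + 1))
      {h : ψ.V → (blowup D 2).V | IsHom ψ (blowup D 2) h ∧ h x = h x'} := by
  constructor
  · intro h hh _ s t ht
    have := hh s t ht
    change (fun i => ((h ∘ t) i).1) ∈ D.rel s at this
    change (fun i => ((Function.update h x' ((h x').1, (h x').2 + 1) ∘ t) i).1) ∈ D.rel s
    convert this using 2 with i
    simp only [Function.comp_apply]
    by_cases hi : t i = x'
    · rw [hi]
      have e := Function.update_self x' (((h x').1, (h x').2 + 1) : D.V × Fin 2) h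
      have e2 := congrArg (fun p : D.V × Fin 2 => p.1) e
      exact e2
    · exact congrArg (fun p : D.V × Fin 2 => p.1) (Function.update_of_ne hi _ h)
  · intro h1 hh1 h2 hh2 heq
    funext v
    by_cases hv : v = x'
    · subst hv
      rw [← hh1.2, ← hh2.2]
      have := congrFun heq x
      exact (Function.update_of_ne hxx _ h1).symm.trans (this.trans (Function.update_of_ne hxx _ h2))
    · have := congrFun heq v
      exact (Function.update_of_ne hv _ h1).symm.trans (this.trans (Function.update_of_ne hv _ h2))
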